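/- For every n ≥ 2 one has p_{2n+1} = p_{2n-1}·01·p_{2n} = p_{2n}·10·p_{2n-1} and p_{2n+2} = p_{2n}·10·p_{2n+1} = p_{2n+1}·01·p_{2n}. -/
import Mathlib


/-- The finite Fibonacci words over the alphabet {0,1}: f 1 = 1, f 2 = 0,
and f n = f (n-1) ++ f (n-2) for n ≥ 3. -/
def fibWord : ℕ → List ℕ
  | 0 => []
  | 1 => [1]
  | 2 => [0]
  | n + 3 => fibWord (n + 2) ++ fibWord (n + 1)

/-- The central word p n: the Fibonacci word f n with its last two letters removed. -/
def centralWord (n : ℕ) : List ℕ := (fibWord n).dropLast.dropLast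

lemma dl2 (w : List ℕ) (a b : ℕ) : (w ++ [a, b]).dropLast.dropLast = w := by
  have : w ++ [a, b] = (w ++ [a]) ++ [b] := by simp
  rw [this, List.dropLast_concat, List.dropLast_concat]

lemma central_eq (m : ℕ) (w : List ℕ) (a b : ℕ) (h : fibWord m = w ++ [a, b]) :
    centralWord m = w := by
  rw [centralWord, h, dl2]

lemma key : ∀ k, fibWord (2*k+3) = centralWord (2*k+3) ++ [0, 1] ∧
    fibWord (2*k+4) = centralWord (2*k+4) ++ [1, 0] := by
  intro k
  induction k with
  | zero =>
    constructor <;> rfl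
  | succ k ih =>
    obtain ⟨h1, h2⟩ := ih
    have e1 : fibWord (2*(k+1)+3) = fibWord (2*k+4) ++ fibWord (2*k+3) := by
      have : 2*(k+1)+3 = (2*k+2)+3 := by ring
      rw [this, fibWord]
      try (congr 2 <;> omega)
    have e2 : fibWord (2*(k+1)+4) = fibWord (2*(k+1)+3) ++ fibWord (2*k+4) := by
      have : 2*(k+1)+4 = (2*k+3)+3 := by ring
      rw [this, fibWord]
      try (congr 2 <;> omega)
    have f1 : fibWord (2*(k+1)+3) = (fibWord (2*k+4) ++ centralWord (2*k+3)) ++ [0, 1] := by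
      rw [e1, h1, List.append_assoc]
    have c1 : centralWord (2*(k+1)+3) = fibWord (2*k+4) ++ centralWord (2*k+3) :=
      central_eq _ _ _ _ f1
    refine ⟨by rw [f1, c1], ?_⟩
    have f2 : fibWord (2*(k+1)+4) = (fibWord (2*(k+1)+3) ++ centralWord (2*k+4)) ++ [1, 0] := by
      rw [e2, h2, List.append_assoc]
    rw [f2, central_eq _ _ _ _ f2]

theorem stmt3 (n : ℕ) (hn : 2 ≤ n) :
    (centralWord (2 * n + 1) = centralWord (2 * n - 1) ++ [0, 1] ++ centralWord (2 * n) ∧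
     centralWord (2 * n + 1) = centralWord (2 * n) ++ [1, 0] ++ centralWord (2 * n - 1)) ∧
    (centralWord (2 * n + 2) = centralWord (2 * n) ++ [1, 0] ++ centralWord (2 * n + 1) ∧
     centralWord (2 * n + 2) = centralWord (2 * n + 1) ++ [0, 1] ++ centralWord (2 * n)) := by
  induction n, hn using Nat.le_induction with
  | base => constructor <;> constructor <;> rfl
  | succ n hn ih =>
    obtain ⟨m, rfl⟩ : ∃ m, n = m + 2 := ⟨n - 2, by omega⟩
    -- normalize indices
    have i1 : 2 * (m + 2) - 1 = 2*m+3 := by omega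
    have i2 : 2 * (m + 2) = 2*m+4 := by ring
    have i3 : 2 * (m + 2) + 1 = 2*m+5 := by ring
    have i4 : 2 * (m + 2) + 2 = 2*m+6 := by ring
    have j1 : 2 * (m + 2 + 1) - 1 = 2*m+5 := by omega
    have j2 : 2 * (m + 2 + 1) = 2*m+6 := by ring
    have j3 : 2 * (m + 2 + 1) + 1 = 2*m+7 := by ring
    have j4 : 2 * (m + 2 + 1) + 2 = 2*m+8 := by ring
    rw [i3, i4, i1, i2] at ih
    rw [j3, j4, j1, j2]
    obtain ⟨⟨_, _⟩, hc, hd⟩ := ih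
    have k1 := key (m+1)
    have k2 := key (m+2)
    have K1 : 2*(m+1)+3 = 2*m+5 := by ring
    have K2 : 2*(m+1)+4 = 2*m+6 := by ring
    have K3 : 2*(m+2)+3 = 2*m+7 := by ring
    have K4 : 2*(m+2)+4 = 2*m+8 := by ring
    rw [K1, K2] at k1
    rw [K3, K4] at k2
    obtain ⟨t5, t6⟩ := k1
    have e7 : fibWord (2*m+7) = fibWord (2*m+6) ++ fibWord (2*m+5) := by
      have : 2*m+7 = (2*m+4)+3 := by ring
      rw [this, fibWord]
      try (congr 2 <;> omega)
    have e8 : fibWord (2*m+8) = fibWord (2*m+7) ++ fibWord (2*m+6) := by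
      have : 2*m+8 = (2*m+5)+3 := by ring
      rw [this, fibWord]
      try (congr 2 <;> omega)
    have B : centralWord (2*m+7) = centralWord (2*m+6) ++ [1, 0] ++ centralWord (2*m+5) := by
      apply central_eq _ _ 0 1
      rw [e7, t5, t6]; simp
    have D : centralWord (2*m+8) = centralWord (2*m+7) ++ [0, 1] ++ centralWord (2*m+6) := by
      apply central_eq _ _ 1 0
      rw [e8, k2.1, t6]; simp
    have A : centralWord (2*m+7) = centralWord (2*m+5) ++ [0, 1] ++ centralWord (2*m+6) := by
      rw [B]
      conv_lhs => rw [hd]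
      conv_rhs => rw [hc]
      simp
    have C : centralWord (2*m+8) = centralWord (2*m+6) ++ [1, 0] ++ centralWord (2*m+7) := by
      conv_lhs => rw [D]
      conv_rhs => rw [A]
      rw [B]; simp
    exact ⟨⟨A, B⟩, C, D⟩
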